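/- Let K be a complete valued field (valuation into ℝ ∪ {∞}) whose value group is dense in ℝ, and let u be a reduced valuation on K^m. Then for every ε > 0 there exists a basis of K^m, obtained from the standard basis by a triangular change of coordinates, with respect to which |u(y) − min_i v(y_i)| ≤ ε for all y ∈ K^m expressed in the new coordinates. -/

import Mathlib

private lemma rv_cons_add {K : Type*} [Field K] {n : ℕ} (x y : Fin n → K) :
    (Fin.cons 0 x : Fin (n+1) → K) + Fin.cons 0 y = Fin.cons 0 (x + y) := by
  funext i
  refine Fin.cases ?_ ?_ i <;> simp

private lemma rv_cons_sub {K : Type*} [Field K] {n : ℕ} (x y : Fin n → K) :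
    (Fin.cons 0 x : Fin (n+1) → K) - Fin.cons 0 y = Fin.cons 0 (x - y) := by
  funext i
  refine Fin.cases ?_ ?_ i <;> simp

private lemma rv_cons_smul {K : Type*} [Field K] {n : ℕ} (a : K) (x : Fin n → K) :
    a • (Fin.cons 0 x : Fin (n+1) → K) = Fin.cons 0 (a • x) := by
  funext i
  refine Fin.cases ?_ ?_ i <;> simp

private lemma rv_cons_zero {K : Type*} [Field K] {n : ℕ} :
    (Fin.cons 0 (0 : Fin n → K) : Fin (n+1) → K) = 0 := by
  funext i
  refine Fin.cases ?_ ?_ i <;> simp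

private lemma rv_cancel (c : ℝ) {X Y : EReal} (h : X + (c : EReal) ≤ Y + (c : EReal)) :
    X ≤ Y :=
  (EReal.addLECancellable_coe c).add_le_add_iff_right.mp h

private lemma rv_top (X : EReal) (hX : ∀ r : ℝ, (r : EReal) ≤ X) : X = ⊤ := by
  induction X using EReal.rec with
  | bot => exact absurd (hX 0) (by simp)
  | coe x => exfalso; have := EReal.coe_le_coe_iff.mp (hX (x+1)); linarith
  | top => rfl

private lemma rv_inf_succ {n : ℕ} (f : Fin (n+1) → EReal) :
    (⨅ i, f i) = min (f 0) (⨅ i : Fin n, f i.succ) := by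
  apply le_antisymm
  · exact le_min (iInf_le _ 0) (le_iInf fun i => iInf_le _ i.succ)
  · exact le_iInf fun i =>
      Fin.cases (min_le_left _ _) (fun i' => (min_le_right _ _).trans (iInf_le _ i')) i

private lemma rv_v_one {K : Type*} [Field K]
    (v : K → EReal) (hvbot : ∀ a, v a ≠ ⊥)
    (hvmul : ∀ a b, v (a * b) = v a + v b)
    (hker : ∀ a : K, v a = ⊤ → a = 0) : v 1 = 0 := by
  have h1 : v 1 ≠ ⊤ := fun h => one_ne_zero (hker 1 h)
  have hx : v 1 = ((v 1).toReal : EReal) := (EReal.coe_toReal h1 (hvbot 1)).symm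
  have h := hvmul 1 1
  rw [mul_one, hx, ← EReal.coe_add] at h
  have := EReal.coe_eq_coe_iff.mp h
  rw [hx]
  norm_num
  linarith

private lemma rv_v_negone {K : Type*} [Field K]
    (v : K → EReal) (hvbot : ∀ a, v a ≠ ⊥)
    (hvmul : ∀ a b, v (a * b) = v a + v b)
    (hker : ∀ a : K, v a = ⊤ → a = 0) : v (-1) = 0 := by
  have h1 : v (-1) ≠ ⊤ := fun h => by simpa using hker (-1) h
  have hx : v (-1) = ((v (-1)).toReal : EReal) := (EReal.coe_toReal h1 (hvbot _)).symm
  have h := hvmul (-1) (-1)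
  rw [neg_mul_neg, one_mul, rv_v_one v hvbot hvmul hker, hx, ← EReal.coe_add] at h
  rw [← EReal.coe_zero] at h
  have := EReal.coe_eq_coe_iff.mp h.symm
  rw [hx]
  norm_num
  linarith

private theorem rv_aux {K : Type*} [Field K]
    (v : K → EReal) (hv0 : v 0 = ⊤) (hvbot : ∀ a, v a ≠ ⊥)
    (hvmul : ∀ a b, v (a * b) = v a + v b)
    (hvadd : ∀ a b, min (v a) (v b) ≤ v (a + b))
    (hker : ∀ a : K, v a = ⊤ → a = 0)
    (hdense : ∀ α β : ℝ, α < β → ∃ a : K, (α : EReal) < v a ∧ v a < (β : EReal))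
    (hcomplete : ∀ f : ℕ → K,
      (∀ r : ℝ, ∃ N, ∀ p ≥ N, ∀ q ≥ N, (r : EReal) ≤ v (f p - f q)) →
      ∃ a : K, ∀ r : ℝ, ∃ N, ∀ p ≥ N, (r : EReal) ≤ v (f p - a)) :
    ∀ (m : ℕ) (u : (Fin m → K) → EReal), (∀ x, u x ≠ ⊥) →
    (∀ (a : K) (x : Fin m → K), u (a • x) = v a + u x) →
    (∀ x y, min (u x) (u y) ≤ u (x + y)) →
    (∀ x, u x = ⊤ ↔ x = 0) → ∀ ε : ℝ, 0 < ε →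
    ∃ A : Matrix (Fin m) (Fin m) K, IsUnit A.det ∧ (∀ i j : Fin m, i < j → A i j = 0) ∧
      ∀ y : Fin m → K,
        u (A.mulVec y) ≤ (⨅ i, v (y i)) + (ε : EReal) ∧
        (⨅ i, v (y i)) ≤ u (A.mulVec y) + (ε : EReal) := by
  intro m
  induction m with
  | zero =>
    intro u hubot husmul huadd hured ε hε
    refine ⟨1, by simp, fun i j h => i.elim0, fun y => ?_⟩
    have hy : y = 0 := funext fun i => i.elim0
    have h1 : u (Matrix.mulVec 1 y) = ⊤ := by
      rw [Matrix.one_mulVec, hy]; exact (hured 0).mpr rfl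
    have h2 : (⨅ i : Fin 0, v (y i)) = ⊤ := by simp
    rw [h1, h2]
    constructor <;>
      · rw [EReal.top_add_of_ne_bot (EReal.coe_ne_bot ε)]
  | succ n ih =>
    intro u hubot husmul huadd hured ε hε
    have hvn1 : v (-1) = 0 := rv_v_negone v hvbot hvmul hker
    have huneg : ∀ x : Fin (n+1) → K, u (-x) = u x := by
      intro x
      have h := husmul (-1) x
      rwa [neg_one_smul, hvn1, zero_add] at h
    have husub : ∀ x y : Fin (n+1) → K, min (u x) (u y) ≤ u (x - y) := by
      intro x y
      have h := huadd x (-y)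
      rwa [huneg y, ← sub_eq_add_neg] at h
    obtain ⟨A', hA'det, hA'tri, hA'⟩ :=
      ih (fun x => u (Fin.cons 0 x))
        (fun x => hubot _)
        (fun a x => by
          show u (Fin.cons 0 (a • x)) = v a + u (Fin.cons 0 x)
          rw [← rv_cons_smul, husmul])
        (fun x y => by
          show min (u (Fin.cons 0 x)) (u (Fin.cons 0 y)) ≤ u (Fin.cons 0 (x + y))
          rw [← rv_cons_add]; exact huadd _ _)
        (fun x => by
          show u (Fin.cons 0 x) = ⊤ ↔ x = 0
          constructor
          · intro h
            have h2 := (hured _).mp h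
            funext i
            have h3 := congrFun h2 i.succ
            simpa using h3
          · rintro rfl
            rw [rv_cons_zero]
            exact (hured 0).mpr rfl)
        (ε/2) (by positivity)
    have hsurj : ∀ z : Fin n → K, ∃ t, A'.mulVec t = z := fun z =>
      ⟨A'⁻¹.mulVec z, by
        rw [Matrix.mulVec_mulVec, Matrix.mul_nonsing_inv _ hA'det, Matrix.one_mulVec]⟩
    set e : Fin (n+1) → K := Fin.cons 1 0 with he_def
    have hSne : ∀ t : Fin n → K, u (e + Fin.cons 0 (A'.mulVec t)) ≠ ⊤ := by
      intro t h
      have h0 := congrFun ((hured _).mp h) 0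
      simp [he_def] at h0
    set S : Set EReal :=
      Set.range (fun t : Fin n → K => u (e + Fin.cons 0 (A'.mulVec t))) with hS_def
    have hstop : sSup S ≠ ⊤ := by
      intro htop
      have hseq : ∀ k : ℕ, ∃ t : Fin n → K,
          ((k : ℝ) : EReal) < u (e + Fin.cons 0 (A'.mulVec t)) := by
        intro k
        obtain ⟨x, hxS, hx⟩ := sSup_eq_top.mp htop ((k : ℝ) : EReal) (EReal.coe_lt_top _)
        simp only [hS_def, Set.mem_range] at hxS
        obtain ⟨t, rfl⟩ := hxS
        exact ⟨t, hx⟩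
      choose ts hts using hseq
      have hdiff : ∀ p q : ℕ, ∀ i : Fin n,
          ((min (p : ℝ) (q : ℝ) - ε/2 : ℝ) : EReal) ≤ v ((ts p - ts q) i) := by
        intro p q i
        have hsub : (e + Fin.cons 0 (A'.mulVec (ts p))) - (e + Fin.cons 0 (A'.mulVec (ts q)))
            = Fin.cons 0 (A'.mulVec (ts p - ts q)) := by
          rw [add_sub_add_left_eq_sub, rv_cons_sub, Matrix.mulVec_sub]
        have h1 : ((min (p : ℝ) (q : ℝ) : ℝ) : EReal)
            ≤ u (Fin.cons 0 (A'.mulVec (ts p - ts q))) := by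
          rw [← hsub]
          refine le_trans (le_min (le_of_lt ?_) (le_of_lt ?_)) (husub _ _)
          · exact lt_of_le_of_lt (EReal.coe_le_coe_iff.mpr (min_le_left _ _)) (hts p)
          · exact lt_of_le_of_lt (EReal.coe_le_coe_iff.mpr (min_le_right _ _)) (hts q)
        have h2 := (hA' (ts p - ts q)).1
        have h3 : ((min (p : ℝ) (q : ℝ) - ε/2 : ℝ) : EReal) ≤ ⨅ i, v ((ts p - ts q) i) := by
          apply rv_cancel (ε/2)
          calc ((min (p : ℝ) (q : ℝ) - ε/2 : ℝ) : EReal) + ((ε/2 : ℝ) : EReal)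
              = ((min (p : ℝ) (q : ℝ) : ℝ) : EReal) := by
                rw [← EReal.coe_add]; norm_num
            _ ≤ u (Fin.cons 0 (A'.mulVec (ts p - ts q))) := h1
            _ ≤ (⨅ i, v ((ts p - ts q) i)) + ((ε/2 : ℝ) : EReal) := h2
        exact le_trans h3 (iInf_le _ i)
      have hcau : ∀ i : Fin n, ∃ a : K, ∀ r : ℝ, ∃ N, ∀ p ≥ N,
          (r : EReal) ≤ v (ts p i - a) := by
        intro i
        apply hcomplete
        intro r
        refine ⟨⌈r + ε/2⌉₊, fun p hp q hq => ?_⟩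
        have hle : r ≤ min (p : ℝ) (q : ℝ) - ε/2 := by
          have h1 : r + ε/2 ≤ (⌈r + ε/2⌉₊ : ℝ) := Nat.le_ceil _
          have hp' : ((⌈r + ε/2⌉₊ : ℕ) : ℝ) ≤ (p : ℝ) := Nat.cast_le.mpr hp
          have hq' : ((⌈r + ε/2⌉₊ : ℕ) : ℝ) ≤ (q : ℝ) := Nat.cast_le.mpr hq
          have h2 : r + ε/2 ≤ min (p : ℝ) (q : ℝ) := le_min (by linarith) (by linarith)
          linarith
        have h4 := hdiff p q i
        have h5 : (ts p - ts q) i = ts p i - ts q i := rfl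
        rw [h5] at h4
        exact le_trans (EReal.coe_le_coe_iff.mpr hle) h4
      choose aa haa using hcau
      have hfin : ∀ r : ℝ, (r : EReal) ≤ u (e + Fin.cons 0 (A'.mulVec aa)) := by
        intro r
        choose N hN using fun i => haa i (r + ε/2)
        set P : ℕ := max (⌈r⌉₊) (Finset.univ.sup N) with hP_def
        have hNP : ∀ i, N i ≤ P := fun i =>
          le_trans (Finset.le_sup (Finset.mem_univ i)) (le_max_right _ _)
        have h1 : (r : EReal) ≤ u (e + Fin.cons 0 (A'.mulVec (ts P))) := by
          refine le_of_lt (lt_of_le_of_lt ?_ (hts P))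
          refine EReal.coe_le_coe_iff.mpr ?_
          calc r ≤ (⌈r⌉₊ : ℝ) := Nat.le_ceil r
            _ ≤ (P : ℝ) := Nat.cast_le.mpr (le_max_left _ _)
        have h2 : (r : EReal) ≤ u (Fin.cons 0 (A'.mulVec (ts P - aa))) := by
          have hinf : ((r + ε/2 : ℝ) : EReal) ≤ ⨅ i, v ((ts P - aa) i) := by
            refine le_iInf fun i => ?_
            have h6 := hN i P (hNP i)
            have h5 : (ts P - aa) i = ts P i - aa i := rfl
            rw [h5]
            exact h6
          have h3 := (hA' (ts P - aa)).2
          apply rv_cancel (ε/2)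
          calc (r : EReal) + ((ε/2 : ℝ) : EReal) = ((r + ε/2 : ℝ) : EReal) := by
                rw [← EReal.coe_add]
            _ ≤ ⨅ i, v ((ts P - aa) i) := hinf
            _ ≤ u (Fin.cons 0 (A'.mulVec (ts P - aa))) + ((ε/2 : ℝ) : EReal) := h3
        have heq : e + Fin.cons 0 (A'.mulVec aa)
            = (e + Fin.cons 0 (A'.mulVec (ts P))) - Fin.cons 0 (A'.mulVec (ts P - aa)) := by
          rw [Matrix.mulVec_sub, ← rv_cons_sub]
          abel
        rw [heq]
        exact le_trans (le_min h1 h2) (husub _ _)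
      exact hSne aa (rv_top _ hfin)
    have hsbot : sSup S ≠ ⊥ := by
      intro h
      have h1 : u (e + Fin.cons 0 (A'.mulVec 0)) ≤ sSup S := le_sSup ⟨0, rfl⟩
      rw [h] at h1
      exact hubot _ (le_bot_iff.mp h1)
    set s : ℝ := (sSup S).toReal with hs_def
    have hs : sSup S = (s : EReal) := (EReal.coe_toReal hstop hsbot).symm
    obtain ⟨x0, hx0S, hx0⟩ : ∃ x ∈ S, ((s - ε/8 : ℝ) : EReal) < x := by
      apply lt_sSup_iff.mp
      rw [hs]
      exact EReal.coe_lt_coe_iff.mpr (by linarith)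
    simp only [hS_def, Set.mem_range] at hx0S
    obtain ⟨t₀, rfl⟩ := hx0S
    set w : Fin (n+1) → K := e + Fin.cons 0 (A'.mulVec t₀) with hw_def
    have hwtop : u w ≠ ⊤ := hSne t₀
    have huw : u w = ((u w).toReal : EReal) := (EReal.coe_toReal hwtop (hubot w)).symm
    set uw : ℝ := (u w).toReal with huw_def
    have huw1 : s - ε/8 < uw := by
      rw [huw] at hx0
      exact EReal.coe_lt_coe_iff.mp hx0
    have huw2 : uw ≤ s := by
      have h1 : u w ≤ sSup S := le_sSup ⟨t₀, rfl⟩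
      rw [hs, huw] at h1
      exact EReal.coe_le_coe_iff.mp h1
    obtain ⟨a, hva1, hva2⟩ := hdense (-uw - ε/8) (-uw) (by linarith)
    have hvatop : v a ≠ ⊤ := ne_top_of_lt hva2
    have ha0 : a ≠ 0 := fun h => by
      rw [h, hv0] at hva2; exact not_top_lt hva2
    have hva : v a = ((v a).toReal : EReal) := (EReal.coe_toReal hvatop (hvbot a)).symm
    set va : ℝ := (v a).toReal with hva_def
    have hva1' : -uw - ε/8 < va := by
      rw [hva] at hva1; exact EReal.coe_lt_coe_iff.mp hva1
    have hva2' : va < -uw := by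
      rw [hva] at hva2; exact EReal.coe_lt_coe_iff.mp hva2
    set b : Fin (n+1) → K := a • w with hb_def
    have hub : u b = ((va + uw : ℝ) : EReal) := by
      rw [hb_def, husmul, hva, huw, ← EReal.coe_add]
    have horth : ∀ (t : Fin n → K) (c : K),
        u (Fin.cons 0 t + c • b) ≤ v c + ((va + uw + ε/8 : ℝ) : EReal) := by
      intro t c
      by_cases hc : c = 0
      · subst hc
        rw [hv0, EReal.top_add_of_ne_bot (EReal.coe_ne_bot _)]
        exact le_top
      · have hca : c * a ≠ 0 := mul_ne_zero hc ha0
        obtain ⟨t', ht'⟩ := hsurj (A'.mulVec t₀ + (c * a)⁻¹ • t)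
        have key : Fin.cons 0 t + c • b = (c * a) • (e + Fin.cons 0 (A'.mulVec t')) := by
          rw [ht', ← rv_cons_add, ← rv_cons_smul, ← add_assoc, ← hw_def, smul_add,
            smul_inv_smul₀ hca, hb_def, smul_smul]
          exact add_comm _ _
        have hle1 : u (e + Fin.cons 0 (A'.mulVec t')) ≤ (s : EReal) := by
          rw [← hs]; exact le_sSup ⟨t', rfl⟩
        rw [key, husmul, hvmul, add_assoc]
        refine add_le_add_right ?_ (v c)
        calc v a + u (e + Fin.cons 0 (A'.mulVec t')) ≤ v a + (s : EReal) :=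
              add_le_add_right hle1 _
          _ = ((va + s : ℝ) : EReal) := by rw [hva, ← EReal.coe_add]
          _ ≤ _ := EReal.coe_le_coe_iff.mpr (by linarith)
    have horth2 : ∀ (t : Fin n → K) (c : K),
        u (Fin.cons 0 t + c • b) ≤ u (Fin.cons 0 t) + ((ε/8 : ℝ) : EReal) := by
      intro t c
      have h1 : u (Fin.cons 0 t + c • b) ≤ u (c • b) + ((ε/8 : ℝ) : EReal) := by
        rw [husmul, hub, add_assoc, ← EReal.coe_add]
        exact horth t c
      have h2 : min (u (Fin.cons 0 t + c • b)) (u (c • b)) ≤ u (Fin.cons 0 t) := by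
        have h := husub (Fin.cons 0 t + c • b) (c • b)
        rwa [add_sub_cancel_right] at h
      rcases le_total (u (Fin.cons 0 t + c • b)) (u (c • b)) with h | h
      · rw [min_eq_left h] at h2
        calc u (Fin.cons 0 t + c • b) = u (Fin.cons 0 t + c • b) + 0 := (add_zero _).symm
          _ ≤ u (Fin.cons 0 t) + ((ε/8 : ℝ) : EReal) :=
              add_le_add h2 (by exact_mod_cast (by positivity : (0:ℝ) ≤ ε/8))
      · rw [min_eq_right h] at h2
        exact le_trans h1 (add_le_add_left h2 _)
    set A : Matrix (Fin (n+1)) (Fin (n+1)) K :=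
      Matrix.of (fun i => Fin.cons (b i)
        (fun j : Fin n => (Fin.cons (0 : K) (fun i' : Fin n => A' i' j) : Fin (n+1) → K) i)) with hA_def
    have hAc0 : ∀ i, A i 0 = b i := fun i => by simp [hA_def]
    have hA0s : ∀ j : Fin n, A 0 j.succ = 0 := fun j => by simp [hA_def]
    have hAss : ∀ (i j : Fin n), A i.succ j.succ = A' i j := fun i j => by simp [hA_def]
    have hAtri : ∀ i j : Fin (n+1), i < j → A i j = 0 := by
      intro i j hij
      rcases Fin.eq_zero_or_eq_succ j with rfl | ⟨j', rfl⟩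
      · exact absurd hij (Fin.not_lt_zero i)
      · rcases Fin.eq_zero_or_eq_succ i with rfl | ⟨i', rfl⟩
        · exact hA0s j'
        · rw [hAss]
          exact hA'tri i' j' (by exact_mod_cast Fin.succ_lt_succ_iff.mp hij)
    have hb0 : b 0 = a := by
      have h1 : w 0 = 1 := by
        rw [hw_def]
        simp [he_def]
      rw [hb_def]
      show a * w 0 = a
      rw [h1, mul_one]
    have hdetu : IsUnit A.det := by
      have h1 : A.det = ∏ i, A i i :=
        Matrix.det_of_lowerTriangular A
          (fun i j h => hAtri i j (by exact_mod_cast h))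
      have h2 : A'.det = ∏ i, A' i i :=
        Matrix.det_of_lowerTriangular A'
          (fun i j h => hA'tri i j (by exact_mod_cast h))
      rw [h1, Fin.prod_univ_succ, hAc0, hb0]
      have h3 : ∏ i : Fin n, A i.succ i.succ = A'.det := by
        rw [h2]
        exact Finset.prod_congr rfl fun i _ => hAss i i
      rw [h3]
      exact isUnit_iff_ne_zero.mpr (mul_ne_zero ha0 (isUnit_iff_ne_zero.mp hA'det))
    have hmv : ∀ y : Fin (n+1) → K,
        A.mulVec y = Fin.cons 0 (A'.mulVec (fun i => y i.succ)) + (y 0) • b := by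
      intro y
      funext i
      refine Fin.cases ?_ ?_ i
      · simp only [Matrix.mulVec, dotProduct, Fin.sum_univ_succ, hAc0, hA0s, zero_mul,
          Finset.sum_const_zero, add_zero, Pi.add_apply, Pi.smul_apply, Fin.cons_zero,
          smul_eq_mul, zero_add]
        exact mul_comm _ _
      · intro i'
        simp only [Matrix.mulVec, dotProduct, Fin.sum_univ_succ, hAc0, hAss, Pi.add_apply,
          Pi.smul_apply, Fin.cons_succ, smul_eq_mul]
        ring
    refine ⟨A, hdetu, hAtri, fun y => ?_⟩
    have hinf : (⨅ i, v (y i)) = min (v (y 0)) (⨅ i : Fin n, v (y i.succ)) :=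
      rv_inf_succ _
    obtain ⟨hz1, hz2⟩ := hA' (fun i => y i.succ)
    rw [hmv y, hinf]
    constructor
    · rcases le_total (v (y 0)) (⨅ i : Fin n, v (y i.succ)) with h | h
      · rw [min_eq_left h]
        calc u (Fin.cons 0 (A'.mulVec fun i => y i.succ) + y 0 • b)
            ≤ v (y 0) + ((va + uw + ε/8 : ℝ) : EReal) := horth _ _
          _ ≤ v (y 0) + (ε : EReal) :=
              add_le_add_right (EReal.coe_le_coe_iff.mpr (by linarith)) _
      · rw [min_eq_right h]
        calc u (Fin.cons 0 (A'.mulVec fun i => y i.succ) + y 0 • b)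
            ≤ u (Fin.cons 0 (A'.mulVec fun i => y i.succ)) + ((ε/8 : ℝ) : EReal) :=
              horth2 _ _
          _ ≤ ((⨅ i : Fin n, v (y i.succ)) + ((ε/2 : ℝ) : EReal)) + ((ε/8 : ℝ) : EReal) :=
              add_le_add_left hz1 _
          _ = (⨅ i : Fin n, v (y i.succ)) + ((ε/2 + ε/8 : ℝ) : EReal) := by
              rw [add_assoc, ← EReal.coe_add]
          _ ≤ _ := add_le_add_right (EReal.coe_le_coe_iff.mpr (by linarith)) _
    · have hmin := huadd (Fin.cons 0 (A'.mulVec fun i => y i.succ)) (y 0 • b)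
      rcases le_total (u (Fin.cons 0 (A'.mulVec fun i => y i.succ))) (u (y 0 • b)) with h | h
      · rw [min_eq_left h] at hmin
        calc min (v (y 0)) (⨅ i : Fin n, v (y i.succ))
            ≤ ⨅ i : Fin n, v (y i.succ) := min_le_right _ _
          _ ≤ u (Fin.cons 0 (A'.mulVec fun i => y i.succ)) + ((ε/2 : ℝ) : EReal) := hz2
          _ ≤ u (Fin.cons 0 (A'.mulVec fun i => y i.succ) + y 0 • b) + (ε : EReal) :=
              add_le_add hmin (EReal.coe_le_coe_iff.mpr (by linarith))
      · rw [min_eq_right h] at hmin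
        calc min (v (y 0)) (⨅ i : Fin n, v (y i.succ)) ≤ v (y 0) := min_le_left _ _
          _ = v (y 0) + 0 := (add_zero _).symm
          _ ≤ v (y 0) + ((va + uw + ε/8 : ℝ) : EReal) :=
              add_le_add_right (by exact_mod_cast (by linarith : (0:ℝ) ≤ va + uw + ε/8)) _
          _ = (v (y 0) + ((va + uw : ℝ) : EReal)) + ((ε/8 : ℝ) : EReal) := by
              rw [EReal.coe_add, ← add_assoc]
          _ = u (y 0 • b) + ((ε/8 : ℝ) : EReal) := by rw [husmul, hub]
          _ ≤ u (Fin.cons 0 (A'.mulVec fun i => y i.succ) + y 0 • b) + (ε : EReal) :=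
              add_le_add hmin (EReal.coe_le_coe_iff.mpr (by linarith))

/-- Over a complete valued field with dense value group, any reduced valuation
on `K^m` is, up to a triangular change of coordinates, within `ε` of the valuation
`ṽ(y) = min_i v(y_i)`. -/
theorem reduced_valuation_close_to_min {K : Type*} [Field K]
    (v : K → EReal) (hv0 : v 0 = ⊤) (hvbot : ∀ a, v a ≠ ⊥)
    (hvmul : ∀ a b, v (a * b) = v a + v b)
    (hvadd : ∀ a b, min (v a) (v b) ≤ v (a + b))
    (hker : ∀ a : K, v a = ⊤ → a = 0)
    (hdense : ∀ α β : ℝ, α < β → ∃ a : K, (α : EReal) < v a ∧ v a < (β : EReal))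
    (hcomplete : ∀ f : ℕ → K,
      (∀ r : ℝ, ∃ N, ∀ p ≥ N, ∀ q ≥ N, (r : EReal) ≤ v (f p - f q)) →
      ∃ a : K, ∀ r : ℝ, ∃ N, ∀ p ≥ N, (r : EReal) ≤ v (f p - a))
    {m : ℕ} (u : (Fin m → K) → EReal) (hubot : ∀ x, u x ≠ ⊥)
    (husmul : ∀ (a : K) (x : Fin m → K), u (a • x) = v a + u x)
    (huadd : ∀ x y, min (u x) (u y) ≤ u (x + y))
    (hured : ∀ x, u x = ⊤ ↔ x = 0)
    (ε : ℝ) (hε : 0 < ε) :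
    ∃ A : Matrix (Fin m) (Fin m) K, IsUnit A.det ∧ (∀ i j : Fin m, i < j → A i j = 0) ∧
      ∀ y : Fin m → K,
        u (A.mulVec y) ≤ (⨅ i, v (y i)) + (ε : EReal) ∧
        (⨅ i, v (y i)) ≤ u (A.mulVec y) + (ε : EReal) :=
  rv_aux v hv0 hvbot hvmul hvadd hker hdense hcomplete m u hubot husmul huadd hured ε hε
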